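/- Let n ∈ ℕ, 1 ≤ k ≤ n, and β ∈ [0,1]. Let X be a measurable space, P a probability measure on X, and g : X → [0,1] a measurable function with ∫_X g dP ≤ β. Then ∫_X B_{n,g(x)}({k,…,n}) dP(x) ≤ f_{n,k}(β). -/

import Mathlib

open MeasureTheory

/-- Binomial upper tail `B_{n,p}({k,…,n})`. -/
noncomputable def binTail (n k : ℕ) (p : ℝ) : ℝ :=
  ∑ j ∈ Finset.Icc k n, (n.choose j : ℝ) * p ^ j * (1 - p) ^ (n - j)

/-- `ψ_{n,k}(p) = p⁻¹ B_{n,p}({k,…,n})`, extended continuously at `0`. -/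
noncomputable def psi (n k : ℕ) (p : ℝ) : ℝ :=
  if p = 0 then (if k = 1 then (n : ℝ) else 0) else p⁻¹ * binTail n k p

/-- `f_{n,k}(u) = u ⋅ sup_{p ∈ [u,1]} ψ_{n,k}(p)`. -/
noncomputable def fnk (n k : ℕ) (u : ℝ) : ℝ := u * sSup (psi n k '' Set.Icc u 1)

noncomputable def bw (n k : ℕ) (p : ℝ) : ℝ :=
  (n * (n-1).choose (k-1) : ℕ) * (p ^ (k-1) * (1-p) ^ (n-1-(k-1)))

noncomputable def bw' (n k : ℕ) (p : ℝ) : ℝ :=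
  (n * (n-1).choose (k-1) : ℕ) *
    (((k-1 : ℕ) : ℝ) * p ^ (k-1-1) * (1-p) ^ (n-1-(k-1))
      - ((n-1-(k-1) : ℕ) : ℝ) * p ^ (k-1) * (1-p) ^ (n-1-(k-1)-1))

noncomputable def hh (n k : ℕ) (p : ℝ) : ℝ := p * bw n k p - binTail n k p

noncomputable def rr (n k : ℕ) : ℝ := if n = 1 then 1 else ((k:ℝ)-1)/((n:ℝ)-1)

lemma term_hasDeriv (n j : ℕ) (p : ℝ) :
    HasDerivAt (fun p : ℝ => (n.choose j : ℝ) * p ^ j * (1 - p) ^ (n - j))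
      ((n.choose j : ℝ) * ((j : ℝ) * p ^ (j-1) * (1-p)^(n-j)
        - ((n-j : ℕ) : ℝ) * p ^ j * (1-p)^(n-j-1))) p := by
  have h1 : HasDerivAt (fun p : ℝ => p ^ j) ((j:ℝ) * p ^ (j-1)) p := hasDerivAt_pow j p
  have h2 : HasDerivAt (fun p : ℝ => (1 - p) ^ (n - j))
      (((n-j : ℕ) : ℝ) * (1-p) ^ (n-j-1) * (-1)) p := by
    have hs : HasDerivAt (fun p : ℝ => 1 - p) (-1) p := by
      simpa using (hasDerivAt_const p (1:ℝ)).fun_sub (hasDerivAt_id p)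
    exact (hasDerivAt_pow (n-j) (1-p)).comp p hs
  have := ((h1.const_mul (n.choose j : ℝ)).fun_mul h2)
  refine this.congr_deriv ?_
  ring

lemma telescope_Icc (f : ℕ → ℝ) (a : ℕ) :
    ∀ b, a ≤ b → ∑ j ∈ Finset.Icc a b, (f (j-1) - f j) = f (a-1) - f b := by
  intro b
  induction b with
  | zero =>
    intro h
    have : a = 0 := Nat.le_zero.mp h
    subst this
    simp
  | succ b ih =>
    intro h
    rcases Nat.lt_or_ge b a with hb | hb
    · have : a = b + 1 := by omega
      subst this
      simp
    · rw [Finset.sum_Icc_succ_top (by omega : a ≤ b + 1), ih hb]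
      simp only [Nat.add_sub_cancel]
      ring

lemma binTail_hasDeriv (n k : ℕ) (hk1 : 1 ≤ k) (hkn : k ≤ n) (p : ℝ) :
    HasDerivAt (binTail n k) (bw n k p) p := by
  set b : ℕ → ℝ := fun j => (n * (n-1).choose j : ℕ) * (p ^ j * (1-p) ^ (n-1-j)) with hb
  have key : ∀ j ∈ Finset.Icc k n,
      (n.choose j : ℝ) * ((j : ℝ) * p ^ (j-1) * (1-p)^(n-j)
        - ((n-j : ℕ) : ℝ) * p ^ j * (1-p)^(n-j-1)) = b (j-1) - b j := by
    intro j hj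
    simp only [Finset.mem_Icc] at hj
    obtain ⟨hjk, hjn⟩ := hj
    have hj1 : 1 ≤ j := le_trans hk1 hjk
    have hn1 : 1 ≤ n := le_trans hj1 hjn
    have e1 : (n.choose j * j : ℕ) = n * (n-1).choose (j-1) := by
      obtain ⟨i, rfl⟩ := Nat.exists_eq_add_of_le hj1
      obtain ⟨m, rfl⟩ := Nat.exists_eq_add_of_le hn1
      simp only [Nat.add_sub_cancel_left]
      calc (1+m).choose (1+i) * (1+i) = (m+1).choose (i+1) * (i+1) := by rw [Nat.add_comm 1 m, Nat.add_comm 1 i]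
        _ = Nat.succ m * m.choose i := (Nat.add_one_mul_choose_eq m i).symm
        _ = (1+m) * m.choose i := by rw [Nat.succ_eq_add_one, Nat.add_comm]
    have e2 : (n.choose j * (n - j) : ℕ) = n * (n-1).choose j := by
      have h := Nat.choose_mul_succ_eq (n-1) j
      have hn : n - 1 + 1 = n := by omega
      rw [hn] at h
      rw [← h]
      ring
    have e3 : n - 1 - (j - 1) = n - j := by omega
    have e4 : n - j - 1 = n - 1 - j := by omega
    rw [hb]
    simp only []
    push_cast [← e1, ← e2, e3, e4]
    ring
  have hsum : HasDerivAt (binTail n k)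
      (∑ j ∈ Finset.Icc k n, ((n.choose j : ℝ) * ((j : ℝ) * p ^ (j-1) * (1-p)^(n-j)
        - ((n-j : ℕ) : ℝ) * p ^ j * (1-p)^(n-j-1)))) p := by
    apply HasDerivAt.fun_sum
    intro j hj
    exact term_hasDeriv n j p
  rw [Finset.sum_congr rfl key, telescope_Icc b k n hkn] at hsum
  have hbn : b n = 0 := by
    rw [hb]
    simp [Nat.choose_eq_zero_of_lt (by omega : n - 1 < n)]
  rw [hbn, sub_zero] at hsum
  exact hsum

lemma gterm_hasDeriv (c : ℝ) (m a : ℕ) (p : ℝ) :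
    HasDerivAt (fun p : ℝ => c * (p ^ a * (1 - p) ^ (m - a)))
      (c * (((a : ℕ) : ℝ) * p ^ (a-1) * (1-p)^(m-a)
        - ((m-a : ℕ) : ℝ) * p ^ a * (1-p)^(m-a-1))) p := by
  have h1 : HasDerivAt (fun p : ℝ => p ^ a) ((a:ℝ) * p ^ (a-1)) p := hasDerivAt_pow a p
  have h2 : HasDerivAt (fun p : ℝ => (1 - p) ^ (m - a))
      (((m-a : ℕ) : ℝ) * (1-p) ^ (m-a-1) * (-1)) p := by
    have hs : HasDerivAt (fun p : ℝ => 1 - p) (-1) p := by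
      simpa using (hasDerivAt_const p (1:ℝ)).fun_sub (hasDerivAt_id p)
    exact (hasDerivAt_pow (m-a) (1-p)).comp p hs
  have := (h1.fun_mul h2).const_mul c
  refine this.congr_deriv ?_
  ring

lemma bw_hasDeriv (n k : ℕ) (p : ℝ) : HasDerivAt (bw n k) (bw' n k p) p :=
  gterm_hasDeriv ((n * (n-1).choose (k-1) : ℕ) : ℝ) (n-1) (k-1) p

lemma bw'_nonneg (n k : ℕ) (hk1 : 1 ≤ k) (hkn : k ≤ n) {p : ℝ} (hp : 0 < p)
    (hple : ((n:ℝ)-1)*p ≤ (k:ℝ)-1) : 0 ≤ bw' n k p := by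
  have hC : (0:ℝ) ≤ (n * (n-1).choose (k-1) : ℕ) := Nat.cast_nonneg _
  rcases Nat.lt_or_ge k 2 with hk2 | hk2
  · -- k = 1
    have hk : k = 1 := by omega
    subst hk
    norm_num at hple
    have hn : n = 1 := by
      by_contra hne
      have h2 : 2 ≤ n := by omega
      have h1 : (1:ℝ) ≤ (n:ℝ) - 1 := by
        have : (2:ℝ) ≤ (n:ℝ) := by exact_mod_cast h2
        linarith
      nlinarith
    subst hn
    simp [bw']
  · -- k ≥ 2
    rcases Nat.eq_or_lt_of_le hkn with heq | hlt
    · subst heq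
      have e0 : k - 1 - (k-1) = 0 := by omega
      simp only [bw', e0]
      simp only [Nat.cast_zero, zero_mul, pow_zero, mul_one, zero_sub, neg_mul,
        sub_zero, mul_zero]
      have : (0:ℝ) ≤ ((k-1:ℕ):ℝ) * p ^ (k-1-1) := by positivity
      nlinarith
    · -- 2 ≤ k < n
      have hn2 : 2 ≤ n := by omega
      have hkr : ((k-1:ℕ):ℝ) = (k:ℝ) - 1 := by push_cast [hk1]; ring
      have hnk : n - 1 - (k-1) = n - k := by omega
      have hnkr : ((n-k:ℕ):ℝ) = (n:ℝ) - (k:ℝ) := by push_cast [hkn]; ring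
      have hp1 : p < 1 := by
        have h1 : (k:ℝ) ≤ (n:ℝ) - 1 := by
          have h : ((k+1:ℕ):ℝ) ≤ (n:ℝ) := by exact_mod_cast hlt
          push_cast at h; linarith
        nlinarith [hple, h1]
      have e5 : p ^ (k-1) = p^(k-2) * p := by
        rw [show k - 1 = (k-2) + 1 by omega, pow_succ]
      have e6 : p ^ (k-1-1) = p^(k-2) := by congr 1 <;> omega
      have e7 : (1-p)^(n-k) = (1-p)^(n-k-1) * (1-p) := by
        conv_lhs => rw [show n - k = (n-k-1) + 1 by omega]
        exact pow_succ _ _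
      have key : (0:ℝ) ≤ ((k:ℝ)-1) * (1-p) - ((n:ℝ)-(k:ℝ)) * p := by nlinarith
      have hA : (0:ℝ) ≤ p ^ (k-2) := pow_nonneg hp.le _
      have hB : (0:ℝ) ≤ (1-p) ^ (n-k-1) := pow_nonneg (by linarith) _
      have final : bw' n k p = ((n * (n-1).choose (k-1) : ℕ) : ℝ) *
          (p^(k-2) * ((1-p)^(n-k-1) * (((k:ℝ)-1)*(1-p) - ((n:ℝ)-(k:ℝ))*p))) := by
        rw [bw', hnk, hkr, hnkr, e5, e6, e7]
        ring
      rw [final]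
      exact mul_nonneg hC (mul_nonneg hA (mul_nonneg hB key))

lemma bw'_nonpos (n k : ℕ) (hk1 : 1 ≤ k) (hkn : k ≤ n) {p : ℝ} (hp : 0 < p) (hp1 : p < 1)
    (hple : (k:ℝ)-1 ≤ ((n:ℝ)-1)*p) : bw' n k p ≤ 0 := by
  have hC : (0:ℝ) ≤ (n * (n-1).choose (k-1) : ℕ) := Nat.cast_nonneg _
  rcases Nat.lt_or_ge k 2 with hk2 | hk2
  · -- k = 1
    have hk : k = 1 := by omega
    subst hk
    simp only [bw']
    have : (0:ℝ) ≤ ((n-1-(1-1):ℕ):ℝ) * p ^ (1-1) * (1-p)^(n-1-(1-1)-1) :=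
      mul_nonneg (mul_nonneg (Nat.cast_nonneg _) (pow_nonneg hp.le _)) (pow_nonneg (by linarith) _)
    simp only [Nat.sub_self, Nat.cast_zero, zero_mul, pow_zero, zero_sub] at this ⊢
    nlinarith
  · rcases Nat.eq_or_lt_of_le hkn with heq | hlt
    · -- k = n : contradiction
      exfalso
      subst heq
      have hk1R : (1:ℝ) ≤ (k:ℝ) - 1 := by
        have : (2:ℝ) ≤ (k:ℝ) := by exact_mod_cast hk2
        linarith
      nlinarith
    · -- 2 ≤ k < n
      have hkr : ((k-1:ℕ):ℝ) = (k:ℝ) - 1 := by push_cast [hk1]; ring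
      have hnk : n - 1 - (k-1) = n - k := by omega
      have hnkr : ((n-k:ℕ):ℝ) = (n:ℝ) - (k:ℝ) := by push_cast [hkn]; ring
      have e5 : p ^ (k-1) = p^(k-2) * p := by
        rw [show k - 1 = (k-2) + 1 by omega, pow_succ]
      have e6 : p ^ (k-1-1) = p^(k-2) := by congr 1 <;> omega
      have e7 : (1-p)^(n-k) = (1-p)^(n-k-1) * (1-p) := by
        conv_lhs => rw [show n - k = (n-k-1) + 1 by omega]
        exact pow_succ _ _
      have key : ((k:ℝ)-1) * (1-p) - ((n:ℝ)-(k:ℝ)) * p ≤ 0 := by nlinarith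
      have hA : (0:ℝ) ≤ p ^ (k-2) := pow_nonneg hp.le _
      have hB : (0:ℝ) ≤ (1-p) ^ (n-k-1) := pow_nonneg (by linarith) _
      have final : bw' n k p = ((n * (n-1).choose (k-1) : ℕ) : ℝ) *
          (p^(k-2) * ((1-p)^(n-k-1) * (((k:ℝ)-1)*(1-p) - ((n:ℝ)-(k:ℝ))*p))) := by
        rw [bw', hnk, hkr, hnkr, e5, e6, e7]
        ring
      rw [final]
      exact mul_nonpos_of_nonneg_of_nonpos hC
        (mul_nonpos_of_nonneg_of_nonpos hA (mul_nonpos_of_nonneg_of_nonpos hB key))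

lemma binTail_zero (n k : ℕ) (hk1 : 1 ≤ k) : binTail n k 0 = 0 := by
  unfold binTail
  apply Finset.sum_eq_zero
  intro j hj
  simp only [Finset.mem_Icc] at hj
  rw [zero_pow (by omega : j ≠ 0)]
  ring

lemma binTail_nonneg (n k : ℕ) {p : ℝ} (hp : 0 ≤ p) (hp1 : p ≤ 1) : 0 ≤ binTail n k p := by
  apply Finset.sum_nonneg
  intro j hj
  have : (0:ℝ) ≤ 1 - p := by linarith
  positivity

lemma binTail_le (n k : ℕ) {p : ℝ} (hp : 0 ≤ p) (hp1 : p ≤ 1) : binTail n k p ≤ 2^n := by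
  have h1 : binTail n k p ≤ ∑ j ∈ Finset.Icc k n, (n.choose j : ℝ) := by
    apply Finset.sum_le_sum
    intro j hj
    have hp' : p ^ j ≤ 1 := pow_le_one₀ hp hp1
    have hq' : (1-p) ^ (n-j) ≤ 1 := pow_le_one₀ (by linarith) (by linarith)
    have h0p : (0:ℝ) ≤ p ^ j := pow_nonneg hp _
    have h0q : (0:ℝ) ≤ (1-p) ^ (n-j) := pow_nonneg (by linarith) _
    calc (n.choose j : ℝ) * p ^ j * (1-p)^(n-j) ≤ (n.choose j : ℝ) * 1 * 1 := by
          apply mul_le_mul (mul_le_mul le_rfl hp' h0p (Nat.cast_nonneg _)) hq' h0q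
          positivity
      _ = (n.choose j : ℝ) := by ring
  have h2 : ∑ j ∈ Finset.Icc k n, (n.choose j : ℝ)
      ≤ ∑ j ∈ Finset.range (n+1), (n.choose j : ℝ) := by
    apply Finset.sum_le_sum_of_subset_of_nonneg
    · intro j hj
      simp only [Finset.mem_Icc] at hj
      simp only [Finset.mem_range]
      omega
    · intro j _ _
      exact Nat.cast_nonneg _
  have h3 : ∑ j ∈ Finset.range (n+1), (n.choose j : ℝ) = 2^n := by
    rw [← Nat.cast_sum, Nat.sum_range_choose]
    push_cast
    ring
  linarith

lemma binTail_continuous (n k : ℕ) : Continuous (binTail n k) := by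
  apply continuous_finset_sum
  intro j _
  exact (continuous_const.mul (continuous_pow j)).mul
    ((continuous_const.sub continuous_id).pow _)

lemma bw_nonneg (n k : ℕ) {p : ℝ} (hp : 0 ≤ p) (hp1 : p ≤ 1) : 0 ≤ bw n k p := by
  unfold bw
  have : (0:ℝ) ≤ 1 - p := by linarith
  positivity

lemma hh_hasDeriv (n k : ℕ) (hk1 : 1 ≤ k) (hkn : k ≤ n) (p : ℝ) :
    HasDerivAt (hh n k) (p * bw' n k p) p := by
  have h := ((hasDerivAt_id p).fun_mul (bw_hasDeriv n k p)).fun_sub (binTail_hasDeriv n k hk1 hkn p)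
  refine h.congr_deriv ?_
  simp only [id_eq, one_mul]
  ring

lemma hh_zero (n k : ℕ) (hk1 : 1 ≤ k) : hh n k 0 = 0 := by
  simp [hh, binTail_zero n k hk1]

lemma rr_nonneg (n k : ℕ) (hk1 : 1 ≤ k) (hkn : k ≤ n) : 0 ≤ rr n k := by
  unfold rr
  split
  · norm_num
  · next hn =>
    have h2 : 2 ≤ n := by omega
    have : (2:ℝ) ≤ (n:ℝ) := by exact_mod_cast h2
    have hk : (1:ℝ) ≤ (k:ℝ) := by exact_mod_cast hk1
    apply div_nonneg <;> linarith

lemma rr_le_one (n k : ℕ) (hk1 : 1 ≤ k) (hkn : k ≤ n) : rr n k ≤ 1 := by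
  unfold rr
  split
  · exact le_refl 1
  · next hn =>
    have h2 : 2 ≤ n := by omega
    have hn2 : (2:ℝ) ≤ (n:ℝ) := by exact_mod_cast h2
    have hk : (k:ℝ) ≤ (n:ℝ) := by exact_mod_cast hkn
    rw [div_le_one (by linarith)]
    linarith

lemma le_of_le_rr (n k : ℕ) (hk1 : 1 ≤ k) (hkn : k ≤ n) {p : ℝ} (hp : p ≤ rr n k) :
    ((n:ℝ)-1)*p ≤ (k:ℝ)-1 := by
  unfold rr at hp
  split at hp
  · next hn =>
    subst hn
    have : k = 1 := by omega
    subst this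
    norm_num
  · next hn =>
    have h2 : 2 ≤ n := by omega
    have hn2 : (2:ℝ) ≤ (n:ℝ) := by exact_mod_cast h2
    rw [← le_div_iff₀' (by linarith : (0:ℝ) < (n:ℝ)-1)]
    linarith [hp]

lemma ge_of_ge_rr (n k : ℕ) (hk1 : 1 ≤ k) (hkn : k ≤ n) {p : ℝ} (hp : rr n k ≤ p)
    (hp1 : p < 1) : (k:ℝ)-1 ≤ ((n:ℝ)-1)*p := by
  unfold rr at hp
  split at hp
  · linarith
  · next hn =>
    have h2 : 2 ≤ n := by omega
    have hn2 : (2:ℝ) ≤ (n:ℝ) := by exact_mod_cast h2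
    rw [← div_le_iff₀' (by linarith : (0:ℝ) < (n:ℝ)-1)]
    linarith [hp]

lemma bw_continuous (n k : ℕ) : Continuous (bw n k) := by
  exact continuous_const.mul ((continuous_pow _).mul
    ((continuous_const.sub continuous_id).pow _))

lemma hh_continuous (n k : ℕ) : Continuous (hh n k) :=
  (continuous_id.mul (bw_continuous n k)).sub (binTail_continuous n k)

/-- the sign-change point of `hh` -/
noncomputable def mm (n k : ℕ) : ℝ := sSup {p | p ∈ Set.Icc (0:ℝ) 1 ∧ 0 ≤ hh n k p}

section mmfacts

variable {n k : ℕ}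

lemma hh_mono (hk1 : 1 ≤ k) (hkn : k ≤ n) :
    MonotoneOn (hh n k) (Set.Icc 0 (rr n k)) := by
  apply monotoneOn_of_deriv_nonneg (convex_Icc _ _) (hh_continuous n k).continuousOn
    (fun x _ => (hh_hasDeriv n k hk1 hkn x).differentiableAt.differentiableWithinAt)
  intro x hx
  rw [interior_Icc, Set.mem_Ioo] at hx
  rw [(hh_hasDeriv n k hk1 hkn x).deriv]
  exact mul_nonneg hx.1.le (bw'_nonneg n k hk1 hkn hx.1 (le_of_le_rr n k hk1 hkn hx.2.le))

lemma hh_anti (hk1 : 1 ≤ k) (hkn : k ≤ n) :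
    AntitoneOn (hh n k) (Set.Icc (rr n k) 1) := by
  apply antitoneOn_of_deriv_nonpos (convex_Icc _ _) (hh_continuous n k).continuousOn
    (fun x _ => (hh_hasDeriv n k hk1 hkn x).differentiableAt.differentiableWithinAt)
  intro x hx
  rw [interior_Icc, Set.mem_Ioo] at hx
  rw [(hh_hasDeriv n k hk1 hkn x).deriv]
  have hx0 : 0 < x := lt_of_le_of_lt (rr_nonneg n k hk1 hkn) hx.1
  exact mul_nonpos_of_nonneg_of_nonpos hx0.le
    (bw'_nonpos n k hk1 hkn hx0 hx.2 (ge_of_ge_rr n k hk1 hkn hx.1.le hx.2))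

lemma bw_anti (hk1 : 1 ≤ k) (hkn : k ≤ n) :
    AntitoneOn (bw n k) (Set.Icc (rr n k) 1) := by
  apply antitoneOn_of_deriv_nonpos (convex_Icc _ _) (bw_continuous n k).continuousOn
    (fun x _ => (bw_hasDeriv n k x).differentiableAt.differentiableWithinAt)
  intro x hx
  rw [interior_Icc, Set.mem_Ioo] at hx
  rw [(bw_hasDeriv n k x).deriv]
  have hx0 : 0 < x := lt_of_le_of_lt (rr_nonneg n k hk1 hkn) hx.1
  exact bw'_nonpos n k hk1 hkn hx0 hx.2 (ge_of_ge_rr n k hk1 hkn hx.1.le hx.2)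

lemma hh_rr_nonneg (hk1 : 1 ≤ k) (hkn : k ≤ n) : 0 ≤ hh n k (rr n k) := by
  have h0 : (0:ℝ) ∈ Set.Icc (0:ℝ) (rr n k) := ⟨le_refl _, rr_nonneg n k hk1 hkn⟩
  have hr : rr n k ∈ Set.Icc (0:ℝ) (rr n k) := ⟨rr_nonneg n k hk1 hkn, le_refl _⟩
  have := hh_mono hk1 hkn h0 hr (rr_nonneg n k hk1 hkn)
  rw [hh_zero n k hk1] at this
  exact this

lemma bddAbove_A : BddAbove {p | p ∈ Set.Icc (0:ℝ) 1 ∧ 0 ≤ hh n k p} :=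
  ⟨1, fun p hp => hp.1.2⟩

lemma rr_mem_A (hk1 : 1 ≤ k) (hkn : k ≤ n) :
    rr n k ∈ {p | p ∈ Set.Icc (0:ℝ) 1 ∧ 0 ≤ hh n k p} :=
  ⟨⟨rr_nonneg n k hk1 hkn, rr_le_one n k hk1 hkn⟩, hh_rr_nonneg hk1 hkn⟩

lemma rr_le_mm (hk1 : 1 ≤ k) (hkn : k ≤ n) : rr n k ≤ mm n k :=
  le_csSup bddAbove_A (rr_mem_A hk1 hkn)

lemma mm_nonneg (hk1 : 1 ≤ k) (hkn : k ≤ n) : 0 ≤ mm n k :=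
  le_trans (rr_nonneg n k hk1 hkn) (rr_le_mm hk1 hkn)

lemma mm_le_one (hk1 : 1 ≤ k) (hkn : k ≤ n) : mm n k ≤ 1 :=
  csSup_le ⟨rr n k, rr_mem_A hk1 hkn⟩ (fun p hp => hp.1.2)

lemma hh_nonneg_of_lt_mm (hk1 : 1 ≤ k) (hkn : k ≤ n) {p : ℝ} (hp : 0 ≤ p)
    (hpm : p < mm n k) : 0 ≤ hh n k p := by
  rcases le_or_gt p (rr n k) with hpr | hpr
  · have := hh_mono hk1 hkn ⟨le_refl _, rr_nonneg n k hk1 hkn⟩ ⟨hp, hpr⟩ hp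
    rw [hh_zero n k hk1] at this
    exact this
  · obtain ⟨q, hq, hpq⟩ := exists_lt_of_lt_csSup ⟨rr n k, rr_mem_A hk1 hkn⟩ hpm
    have hq1 : q ≤ 1 := hq.1.2
    have := hh_anti hk1 hkn ⟨hpr.le, le_trans hpq.le hq1⟩
      ⟨le_trans hpr.le hpq.le, hq1⟩ hpq.le
    exact le_trans hq.2 this

lemma hh_neg_of_gt_mm (hk1 : 1 ≤ k) (hkn : k ≤ n) {p : ℝ} (hp : mm n k < p)
    (hp1 : p ≤ 1) : hh n k p < 0 := by
  by_contra hcon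
  push_neg at hcon
  have hpA : p ∈ {p | p ∈ Set.Icc (0:ℝ) 1 ∧ 0 ≤ hh n k p} :=
    ⟨⟨le_trans (mm_nonneg hk1 hkn) hp.le, hp1⟩, hcon⟩
  exact absurd (le_csSup bddAbove_A hpA) (not_le.mpr hp)

end mmfacts

/-- `ψ` without the special value at 0 -/
noncomputable def psiT (n k : ℕ) (p : ℝ) : ℝ := p⁻¹ * binTail n k p

lemma psiT_hasDeriv (n k : ℕ) (hk1 : 1 ≤ k) (hkn : k ≤ n) {p : ℝ} (hp : p ≠ 0) :
    HasDerivAt (psiT n k) (hh n k p / p^2) p := by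
  have h := (hasDerivAt_inv hp).fun_mul (binTail_hasDeriv n k hk1 hkn p)
  refine h.congr_deriv ?_
  unfold hh
  field_simp
  ring

lemma psiT_le_mm (n k : ℕ) (hk1 : 1 ≤ k) (hkn : k ≤ n) {p : ℝ} (hp : 0 < p)
    (hpm : p ≤ mm n k) : psiT n k p ≤ psiT n k (mm n k) := by
  have hmono : MonotoneOn (psiT n k) (Set.Icc p (mm n k)) := by
    apply monotoneOn_of_deriv_nonneg (convex_Icc _ _)
    · intro x hx
      have hx0 : 0 < x := lt_of_lt_of_le hp hx.1
      exact (psiT_hasDeriv n k hk1 hkn hx0.ne').differentiableAt.continuousAt.continuousWithinAt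
    · intro x hx
      rw [interior_Icc, Set.mem_Ioo] at hx
      have hx0 : 0 < x := lt_trans hp hx.1
      exact (psiT_hasDeriv n k hk1 hkn hx0.ne').differentiableAt.differentiableWithinAt
    · intro x hx
      rw [interior_Icc, Set.mem_Ioo] at hx
      have hx0 : 0 < x := lt_trans hp hx.1
      rw [(psiT_hasDeriv n k hk1 hkn hx0.ne').deriv]
      exact div_nonneg (hh_nonneg_of_lt_mm hk1 hkn hx0.le hx.2) (sq_nonneg _)
  exact hmono ⟨le_refl _, hpm⟩ ⟨hpm, le_refl _⟩ hpm

lemma psiT_anti_after (n k : ℕ) (hk1 : 1 ≤ k) (hkn : k ≤ n) {a b : ℝ} (ha0 : 0 < a)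
    (ham : mm n k ≤ a) (hab : a ≤ b) (hb1 : b ≤ 1) : psiT n k b ≤ psiT n k a := by
  have hanti : AntitoneOn (psiT n k) (Set.Icc a b) := by
    apply antitoneOn_of_deriv_nonpos (convex_Icc _ _)
    · intro x hx
      have hx0 : 0 < x := lt_of_lt_of_le ha0 hx.1
      exact (psiT_hasDeriv n k hk1 hkn hx0.ne').differentiableAt.continuousAt.continuousWithinAt
    · intro x hx
      rw [interior_Icc, Set.mem_Ioo] at hx
      have hx0 : 0 < x := lt_trans ha0 hx.1
      exact (psiT_hasDeriv n k hk1 hkn hx0.ne').differentiableAt.differentiableWithinAt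
    · intro x hx
      rw [interior_Icc, Set.mem_Ioo] at hx
      rw [(psiT_hasDeriv n k hk1 hkn (lt_trans ha0 hx.1).ne').deriv]
      exact div_nonpos_iff.mpr (Or.inr
        ⟨(hh_neg_of_gt_mm hk1 hkn (lt_of_le_of_lt ham hx.1) (hx.2.le.trans hb1)).le, sq_nonneg _⟩)
  exact hanti ⟨le_refl _, hab⟩ ⟨hab, le_refl _⟩ hab

lemma pointwise_bound (n k : ℕ) (hk1 : 1 ≤ k) (hkn : k ≤ n) {β : ℝ} (hβ0 : 0 < β)
    (hβ1 : β ≤ 1) : ∃ lam : ℝ, 0 ≤ lam ∧ ∀ p ∈ Set.Icc (0:ℝ) 1,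
      binTail n k p ≤ β * sSup (psi n k '' Set.Icc β 1) + lam * (p - β) := by
  set S := sSup (psi n k '' Set.Icc β 1) with hSdef
  have himg : ∀ p ∈ Set.Icc β 1, psi n k p = psiT n k p := by
    intro p hp
    have : p ≠ 0 := (lt_of_lt_of_le hβ0 hp.1).ne'
    simp [psi, psiT, this]
  have hbdd : BddAbove (psi n k '' Set.Icc β 1) := by
    refine ⟨β⁻¹ * 2^n, ?_⟩
    rintro y ⟨p, hp, rfl⟩
    have hp0 : 0 < p := lt_of_lt_of_le hβ0 hp.1
    rw [himg p hp]
    unfold psiT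
    have h1 : binTail n k p ≤ 2^n := binTail_le n k hp0.le hp.2
    have h2 : p⁻¹ ≤ β⁻¹ := inv_anti₀ hβ0 hp.1
    have h3 : (0:ℝ) ≤ binTail n k p := binTail_nonneg n k hp0.le hp.2
    calc p⁻¹ * binTail n k p ≤ β⁻¹ * binTail n k p := by
          apply mul_le_mul_of_nonneg_right h2 h3
      _ ≤ β⁻¹ * 2^n := by
          apply mul_le_mul_of_nonneg_left h1 (by positivity)
  have hne : (psi n k '' Set.Icc β 1).Nonempty :=
    ⟨psi n k β, Set.mem_image_of_mem _ ⟨le_refl _, hβ1⟩⟩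
  have hS_ge : ∀ p ∈ Set.Icc β 1, psiT n k p ≤ S := by
    intro p hp
    rw [← himg p hp]
    exact le_csSup hbdd (Set.mem_image_of_mem _ hp)
  have hS0 : 0 ≤ S := by
    have h1 : (0:ℝ) ≤ psiT n k 1 := by
      unfold psiT
      simp only [inv_one, one_mul]
      exact binTail_nonneg n k (by linarith) (le_refl _)
    exact le_trans h1 (hS_ge 1 ⟨hβ1, le_refl _⟩)
  have hpsiT_eq : ∀ p : ℝ, p ≠ 0 → p * psiT n k p = binTail n k p := by
    intro p hp
    unfold psiT
    field_simp
  by_cases hcase : ∀ p, 0 < p → p ≤ 1 → psiT n k p ≤ S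
  · refine ⟨S, hS0, ?_⟩
    intro p hp
    have key : binTail n k p ≤ S * p := by
      rcases eq_or_lt_of_le hp.1 with h0 | h0
      · rw [← h0, binTail_zero n k hk1]
        simp
      · rw [← hpsiT_eq p h0.ne']
        calc p * psiT n k p ≤ p * S := by
              apply mul_le_mul_of_nonneg_left (hcase p h0 hp.2) h0.le
          _ = S * p := mul_comm _ _
    linarith [key]
  · push_neg at hcase
    obtain ⟨q, hq0, hq1, hqS⟩ := hcase
    have hqβ : q < β := by
      by_contra hcon
      push_neg at hcon
      exact absurd (hS_ge q ⟨hcon, hq1⟩) (not_le.mpr hqS)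
    have hmβ : mm n k < β := by
      by_contra hcon
      push_neg at hcon
      have h1 : psiT n k q ≤ psiT n k (mm n k) :=
        psiT_le_mm n k hk1 hkn hq0 (le_trans hqβ.le hcon)
      have h2 : psiT n k (mm n k) ≤ S :=
        hS_ge _ ⟨hcon, mm_le_one hk1 hkn⟩
      linarith
    have hSβ : S = psiT n k β := by
      apply le_antisymm
      · apply csSup_le hne
        rintro y ⟨p, hp, rfl⟩
        rw [himg p hp]
        exact psiT_anti_after n k hk1 hkn hβ0 hmβ.le hp.1 hp.2
      · rw [← himg β ⟨le_refl _, hβ1⟩]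
        exact le_csSup hbdd (Set.mem_image_of_mem _ ⟨le_refl _, hβ1⟩)
    refine ⟨bw n k β, bw_nonneg n k hβ0.le hβ1, ?_⟩
    intro p hp
    rw [hSβ, hpsiT_eq β hβ0.ne']
    -- goal : binTail n k p ≤ binTail n k β + bw n k β * (p - β)
    set F : ℝ → ℝ := fun x => binTail n k β + bw n k β * (x - β) - binTail n k x with hFdef
    have hF : ∀ x : ℝ, HasDerivAt F (bw n k β - bw n k x) x := by
      intro x
      have h1 : HasDerivAt (fun x : ℝ => binTail n k β + bw n k β * (x - β)) (bw n k β) x := by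
        have := (((hasDerivAt_id x).sub_const β).const_mul (bw n k β)).const_add
          (binTail n k β)
        simpa using this
      exact h1.sub (binTail_hasDeriv n k hk1 hkn x)
    have hFcont : Continuous F := by
      have : Differentiable ℝ F := fun x => (hF x).differentiableAt
      exact this.continuous
    have hFβ : F β = 0 := by simp [hFdef]
    have hrrβ : rr n k ≤ β := le_trans (rr_le_mm hk1 hkn) hmβ.le
    have key1 : ∀ x, β ≤ x → x ≤ 1 → 0 ≤ F x := by
      intro x hx1 hx2
      have hmono : MonotoneOn F (Set.Icc β 1) := by
        apply monotoneOn_of_deriv_nonneg (convex_Icc _ _) hFcont.continuousOn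
          (fun y _ => (hF y).differentiableAt.differentiableWithinAt)
        intro y hy
        rw [interior_Icc, Set.mem_Ioo] at hy
        rw [(hF y).deriv]
        have : bw n k y ≤ bw n k β := bw_anti hk1 hkn ⟨hrrβ, hβ1⟩
          ⟨le_trans hrrβ hy.1.le, hy.2.le⟩ hy.1.le
        linarith
      have := hmono ⟨le_refl _, hβ1⟩ ⟨hx1, hx2⟩ hx1
      rw [hFβ] at this
      exact this
    have key2 : ∀ x, mm n k ≤ x → x ≤ β → 0 ≤ F x := by
      intro x hx1 hx2
      have hanti : AntitoneOn F (Set.Icc (mm n k) β) := by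
        apply antitoneOn_of_deriv_nonpos (convex_Icc _ _) hFcont.continuousOn
          (fun y _ => (hF y).differentiableAt.differentiableWithinAt)
        intro y hy
        rw [interior_Icc, Set.mem_Ioo] at hy
        rw [(hF y).deriv]
        have : bw n k β ≤ bw n k y := bw_anti hk1 hkn
          ⟨le_trans (rr_le_mm hk1 hkn) hy.1.le, le_trans hy.2.le hβ1⟩ ⟨hrrβ, hβ1⟩ hy.2.le
        linarith
      have := hanti ⟨hx1, hx2⟩ ⟨le_trans hx1 hx2, le_refl _⟩ hx2
      rw [hFβ] at this
      exact this
    rcases le_or_gt (mm n k) p with hpm | hpm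
    · rcases le_or_gt β p with hβp | hβp
      · have := key1 p hβp hp.2
        rw [hFdef] at this
        simp only at this
        linarith
      · have := key2 p hpm hβp.le
        rw [hFdef] at this
        simp only at this
        linarith
    · -- p < mm
      have hm0 : 0 < mm n k := lt_of_le_of_lt hp.1 hpm
      have hhβ : hh n k β < 0 := hh_neg_of_gt_mm hk1 hkn hmβ hβ1
      have hbwβ : bw n k β ≤ psiT n k β := by
        have h1 : β * bw n k β < binTail n k β := by
          unfold hh at hhβ; linarith
        rw [← hpsiT_eq β hβ0.ne'] at h1
        nlinarith
      have hψβm : psiT n k β ≤ psiT n k (mm n k) :=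
        psiT_anti_after n k hk1 hkn hm0 (le_refl _) hmβ.le hβ1
      have hφp : binTail n k p ≤ p * psiT n k (mm n k) := by
        rcases eq_or_lt_of_le hp.1 with h0 | h0
        · rw [← h0, binTail_zero n k hk1]
          simp
        · rw [← hpsiT_eq p h0.ne']
          exact mul_le_mul_of_nonneg_left
            (psiT_le_mm n k hk1 hkn h0 hpm.le) h0.le
      have hFm : 0 ≤ F (mm n k) := key2 (mm n k) (le_refl _) hmβ.le
      have hφm : binTail n k (mm n k) = mm n k * psiT n k (mm n k) :=
        (hpsiT_eq _ hm0.ne').symm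
      have hprod : 0 ≤ (mm n k - p) * (psiT n k (mm n k) - bw n k β) :=
        mul_nonneg (by linarith) (by linarith)
      rw [hFdef] at hFm
      simp only at hFm
      nlinarith [hφp, hFm, hφm, hprod]

/-- If `g : X → [0,1]` is measurable with `∫ g dP ≤ β`, then
`∫ B_{n,g(x)}({k,…,n}) dP(x) ≤ f_{n,k}(β)`. -/
theorem integral_binTail_le_fnk (n k : ℕ) (hk1 : 1 ≤ k) (hkn : k ≤ n)
    (β : ℝ) (hβ : β ∈ Set.Icc (0:ℝ) 1)
    {X : Type*} [MeasurableSpace X] (P : Measure X) [IsProbabilityMeasure P]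
    (g : X → ℝ) (hg : Measurable g) (hg01 : ∀ x, g x ∈ Set.Icc (0:ℝ) 1)
    (hmean : (∫ x, g x ∂P) ≤ β) :
    ∫ x, binTail n k (g x) ∂P ≤ fnk n k β := by
  have hgint : Integrable g P := by
    apply Integrable.mono' (integrable_const (1:ℝ)) hg.aestronglyMeasurable
    filter_upwards with x
    rw [Real.norm_eq_abs, abs_of_nonneg (hg01 x).1]
    exact (hg01 x).2
  rcases eq_or_lt_of_le hβ.1 with hβ0 | hβ0
  · -- β = 0
    have h0 : ∫ x, g x ∂P = 0 := le_antisymm (hβ0 ▸ hmean)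
      (integral_nonneg fun x => (hg01 x).1)
    have hae : g =ᵐ[P] 0 :=
      (integral_eq_zero_iff_of_nonneg (fun x => (hg01 x).1) hgint).mp h0
    have hae2 : (fun x => binTail n k (g x)) =ᵐ[P] (fun _ => (0:ℝ)) := by
      filter_upwards [hae] with x hx
      rw [Pi.zero_apply] at hx
      rw [hx, binTail_zero n k hk1]
    rw [integral_congr_ae hae2, integral_zero]
    rw [fnk, ← hβ0, zero_mul]
  · -- β > 0
    obtain ⟨lam, hlam0, hpt⟩ := pointwise_bound n k hk1 hkn hβ0 hβ.2
    have hmeas : AEStronglyMeasurable (fun x => binTail n k (g x)) P :=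
      ((binTail_continuous n k).measurable.comp hg).aestronglyMeasurable
    have hint1 : Integrable (fun x => binTail n k (g x)) P := by
      apply Integrable.mono' (integrable_const ((2:ℝ)^n)) hmeas
      filter_upwards with x
      rw [Real.norm_eq_abs, abs_of_nonneg (binTail_nonneg n k (hg01 x).1 (hg01 x).2)]
      exact binTail_le n k (hg01 x).1 (hg01 x).2
    set S := sSup (psi n k '' Set.Icc β 1) with hSdef
    have hint2 : Integrable (fun x => β * S + lam * (g x - β)) P :=
      (integrable_const _).add ((hgint.sub (integrable_const β)).const_mul lam)
    have hstep : ∫ x, binTail n k (g x) ∂P ≤ ∫ x, (β * S + lam * (g x - β)) ∂P :=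
      integral_mono hint1 hint2 (fun x => hpt (g x) (hg01 x))
    have hval : ∫ x, (β * S + lam * (g x - β)) ∂P
        = β * S + lam * ((∫ x, g x ∂P) - β) := by
      have h1 : Integrable (fun x => lam * (g x - β)) P :=
        (hgint.sub (integrable_const β)).const_mul lam
      rw [integral_add (integrable_const _) h1, integral_const, integral_const_mul,
        integral_sub hgint (integrable_const β), integral_const]
      simp [measure_univ]
    rw [hval] at hstep
    have hfin : lam * ((∫ x, g x ∂P) - β) ≤ 0 :=
      mul_nonpos_of_nonneg_of_nonpos hlam0 (by linarith)
    calc ∫ x, binTail n k (g x) ∂P ≤ β * S + lam * ((∫ x, g x ∂P) - β) := hstep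
      _ ≤ β * S := by linarith
      _ = fnk n k β := rfl
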